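/- Let Λ₁ ⊂ Λ₂ be finite subgraphs of ℤ² whose internal vertex boundaries are disjoint, let β ∈ (0,∞), J > 0, h ∈ ℝ, ε > 0. Then for every field realization η : Λ₂ → ℝ, the surface tension satisfies the exact integral identity T_{Λ₁,Λ₂}(η) = 2ε ∫_ℝ D_{Λ₁,Λ₂}(η^{(t)}) dt, where η^{(t)} is obtained from η by adding a uniform field of intensity t on Λ₁, i.e., η^{(t)}_v = η_v + t for v ∈ Λ₁ and η^{(t)}_v = η_v otherwise. -/

import Mathlib

open MeasureTheory ProbabilityTheory Real BigOperators
open scoped Classical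

noncomputable section
namespace RFIM

/-- The two-point spin space `{-1,+1} ⊂ ℤ`. -/
abbrev Spin : Type := ({-1, 1} : Finset ℤ)
/-- The mid-edge value space `{-1,0,+1} ⊂ ℤ`. -/
abbrev Mid : Type := ({-1, 0, 1} : Finset ℤ)

/-- The real value of a spin. -/
def spinR (s : Spin) : ℝ := ((s : ℤ) : ℝ)

/-- The `+1` spin. -/
def pl : Spin := ⟨1, by decide⟩
/-- The `-1` spin. -/
def mn : Spin := ⟨-1, by decide⟩

section GeneralGraph

variable {V : Type} [Fintype V] [DecidableEq V]

/-- Energy `J σ_u σ_v` carried by an (unordered) edge. -/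
def edgeE (J : ℝ) (σ : V → Spin) : Sym2 V → ℝ :=
  Sym2.lift ⟨fun u v => J * spinR (σ u) * spinR (σ v), fun _ _ => by ring⟩

/-- The RFIM Hamiltonian `H(σ) = -∑_{e} J σ_u σ_v - ∑_v (h + ε η_v) σ_v` on a finite graph. -/
def hamG (G : SimpleGraph V) [DecidableRel G.Adj] (J h ε : ℝ) (η : V → ℝ) (σ : V → Spin) : ℝ :=
  - ∑ e ∈ G.edgeFinset, edgeE J σ e - ∑ v, (h + ε * η v) * spinR (σ v)

/-- Partition function restricted to configurations agreeing with `τ` on `A`. -/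
def ZG (G : SimpleGraph V) [DecidableRel G.Adj] (J h ε β : ℝ) (η : V → ℝ)
    (A : Finset V) (τ : V → Spin) : ℝ :=
  ∑ σ : V → Spin,
    if ∀ v ∈ A, σ v = τ v then Real.exp (-(β * hamG G J h ε η σ)) else 0

/-- Thermal expectation of `f` under the Gibbs measure conditioned on `{σ = τ on A}`. -/
def thermalG (G : SimpleGraph V) [DecidableRel G.Adj] (J h ε β : ℝ) (η : V → ℝ)
    (A : Finset V) (τ : V → Spin) (f : (V → Spin) → ℝ) : ℝ :=
  (∑ σ : V → Spin,
    if ∀ v ∈ A, σ v = τ v then f σ * Real.exp (-(β * hamG G J h ε η σ)) else 0) /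
    ZG G J h ε β η A τ

/-- Partition function with spins constrained to the constant value `s₁` on `A₁`
and `s₂` on `A₂`. -/
def Z2G (G : SimpleGraph V) [DecidableRel G.Adj] (J h ε β : ℝ) (η : V → ℝ)
    (A₁ A₂ : Finset V) (s₁ s₂ : Spin) : ℝ :=
  ∑ σ : V → Spin,
    if (∀ v ∈ A₁, σ v = s₁) ∧ (∀ v ∈ A₂, σ v = s₂) then
      Real.exp (-(β * hamG G J h ε η σ)) else 0

/-- Internal vertex boundary of `Λ` in the graph `G`. -/
def vbdryG (G : SimpleGraph V) [DecidableRel G.Adj] (Λ : Finset V) : Finset V :=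
  Λ.filter fun v => ¬ G.neighborFinset v ⊆ Λ

/-- The surface tension `β⁻¹ log (Z^{++} Z^{--} / (Z^{+-} Z^{-+}))` between the internal
vertex boundaries of `Λ₁` and `Λ₂`. -/
def surfTG (G : SimpleGraph V) [DecidableRel G.Adj] (J h ε β : ℝ) (η : V → ℝ)
    (Λ₁ Λ₂ : Finset V) : ℝ :=
  β⁻¹ * Real.log
    ((Z2G G J h ε β η (vbdryG G Λ₁) (vbdryG G Λ₂) pl pl *
      Z2G G J h ε β η (vbdryG G Λ₁) (vbdryG G Λ₂) mn mn) /
     (Z2G G J h ε β η (vbdryG G Λ₁) (vbdryG G Λ₂) pl mn *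
      Z2G G J h ε β η (vbdryG G Λ₁) (vbdryG G Λ₂) mn pl))

end GeneralGraph
section ExtendedModel

variable {V : Type} [Fintype V] [DecidableEq V]

/-- `t = (e^{2Jβ} - 1)^{-1/2}`. -/
def tpar (J β : ℝ) : ℝ := (Real.sqrt (Real.exp (2 * J * β) - 1))⁻¹
/-- `λ = (2 sinh (Jβ))^{1/2}`. -/
def lampar (J β : ℝ) : ℝ := Real.sqrt (2 * Real.sinh (J * β))

/-- The weight `W(a,b) = λ (δ_{a,b} + t δ_{b,0})`. -/
def Wgt (J β : ℝ) (a b : ℤ) : ℝ :=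
  lampar J β * ((if a = b then 1 else 0) + tpar J β * (if b = 0 then 1 else 0))

/-- The product `W(σ_u, k) W(σ_v, k)` over the two endpoints of an edge. -/
def edgeW (J β : ℝ) (σ : V → Spin) (k : ℤ) : Sym2 V → ℝ :=
  Sym2.lift ⟨fun u v => Wgt J β (σ u : ℤ) k * Wgt J β (σ v : ℤ) k, fun _ _ => mul_comm _ _⟩

/-- The weight of an extended configuration `(σ, κ)`:
`∏_{e ∈ E(G)} ∏_{v ∈ e} W(σ_v, κ_e) · e^{-β ∑_v (h + ε η_v) σ_v}`. -/
def extWeight (G : SimpleGraph V) [DecidableRel G.Adj] (J h ε β : ℝ) (η : V → ℝ)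
    (σ : V → Spin) (κ : G.edgeFinset → Mid) : ℝ :=
  (∏ e : G.edgeFinset, edgeW J β σ (κ e : ℤ) (e : Sym2 V)) *
    Real.exp (-(β * ∑ v, (h + ε * η v) * spinR (σ v)))

/-- Extended partition function restricted to vertex configurations agreeing with `τ` on `A`. -/
def extZ (G : SimpleGraph V) [DecidableRel G.Adj] (J h ε β : ℝ) (η : V → ℝ)
    (A : Finset V) (τ : V → Spin) : ℝ :=
  ∑ σ : V → Spin, ∑ κ : G.edgeFinset → Mid,
    if ∀ v ∈ A, σ v = τ v then extWeight G J h ε β η σ κ else 0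

/-- Extended partition function with vertex spins constrained to the constant `s₁` on `A₁`
and `s₂` on `A₂`. -/
def extZ2 (G : SimpleGraph V) [DecidableRel G.Adj] (J h ε β : ℝ) (η : V → ℝ)
    (A₁ A₂ : Finset V) (s₁ s₂ : Spin) : ℝ :=
  ∑ σ : V → Spin, ∑ κ : G.edgeFinset → Mid,
    if (∀ v ∈ A₁, σ v = s₁) ∧ (∀ v ∈ A₂, σ v = s₂) then extWeight G J h ε β η σ κ else 0

/-- Probability of the extended configuration `(σ,κ)` under the extended measure
conditioned on `{σ = τ on A}`. -/
def extProb (G : SimpleGraph V) [DecidableRel G.Adj] (J h ε β : ℝ) (η : V → ℝ)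
    (A : Finset V) (τ : V → Spin) (σ : V → Spin) (κ : G.edgeFinset → Mid) : ℝ :=
  (if ∀ v ∈ A, σ v = τ v then extWeight G J h ε β η σ κ else 0) / extZ G J h ε β η A τ

/-- Expectation of `F` under the product of the extended measures conditioned on
`{σ = τ on A}` and `{σ' = τ' on A}` respectively. -/
def extExp2 (G : SimpleGraph V) [DecidableRel G.Adj] (J h ε β : ℝ) (η : V → ℝ)
    (A : Finset V) (τ τ' : V → Spin)
    (F : (V → Spin) → (G.edgeFinset → Mid) → (V → Spin) → (G.edgeFinset → Mid) → ℝ) : ℝ :=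
  (∑ σ : V → Spin, ∑ κ : G.edgeFinset → Mid, ∑ σ' : V → Spin, ∑ κ' : G.edgeFinset → Mid,
      if (∀ v ∈ A, σ v = τ v) ∧ (∀ v ∈ A, σ' v = τ' v) then
        F σ κ σ' κ' * extWeight G J h ε β η σ κ * extWeight G J h ε β η σ' κ' else 0) /
    (extZ G J h ε β η A τ * extZ G J h ε β η A τ')

/-- The extended graph: vertices of `G` together with one midpoint per edge, each midpoint
joined to the two endpoints of its edge. -/
def extGraph (G : SimpleGraph V) [DecidableRel G.Adj] :
    SimpleGraph (V ⊕ G.edgeFinset) where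
  Adj x y :=
    match x, y with
    | Sum.inl v, Sum.inr e => v ∈ (e : Sym2 V)
    | Sum.inr e, Sum.inl v => v ∈ (e : Sym2 V)
    | _, _ => False
  symm := ⟨by
    rintro (v | e) (w | f) h
    · exact h.elim
    · exact h
    · exact h
    · exact h.elim⟩
  loopless := ⟨by rintro (v | e) h <;> exact h.elim⟩

/-- The values of an extended configuration on the extended vertex set. -/
def extConf {G : SimpleGraph V} [DecidableRel G.Adj]
    (σ : V → Spin) (κ : G.edgeFinset → Mid) : V ⊕ G.edgeFinset → ℤ :=
  fun z => match z with
  | Sum.inl v => (σ v : ℤ)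
  | Sum.inr e => (κ e : ℤ)

/-- The disagreement set of a pair of extended configurations. -/
def DisSet {G : SimpleGraph V} [DecidableRel G.Adj]
    (σ : V → Spin) (κ : G.edgeFinset → Mid) (σ' : V → Spin) (κ' : G.edgeFinset → Mid) :
    Set (V ⊕ G.edgeFinset) :=
  {z | extConf σ κ z ≠ extConf σ' κ' z}

/-- `x` and `y` are connected by a path of `H` all of whose vertices lie in `D`. -/
def ConnectedIn {α : Type} (H : SimpleGraph α) (D : Set α) (x y : α) : Prop :=
  ∃ p : H.Walk x y, ∀ z ∈ p.support, z ∈ D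

end ExtendedModel
section Lattice

/-- The graph (ℓ¹) distance on `ℤ^d`. -/
def dist1 {d : ℕ} (u v : Fin d → ℤ) : ℤ := ∑ i, |u i - v i|

lemma dist1_comm {d : ℕ} (u v : Fin d → ℤ) : dist1 u v = dist1 v u :=
  Finset.sum_congr rfl fun _ _ => abs_sub_comm _ _

/-- The ball `Λ(L) = {v ∈ ℤ^d : d(0,v) ≤ L}` (for the graph distance) as a finite set. -/
def box (d L : ℕ) : Finset (Fin d → ℤ) :=
  (Finset.Icc (fun _ => -(L : ℤ)) (fun _ => (L : ℤ))).filter fun v => dist1 v 0 ≤ (L : ℤ)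

/-- The nearest-neighbor graph on a finite subset `Λ` of `ℤ^d`. -/
def latG (d : ℕ) (Λ : Finset (Fin d → ℤ)) : SimpleGraph Λ where
  Adj u v := dist1 (u : Fin d → ℤ) (v : Fin d → ℤ) = 1
  symm := ⟨fun u v h => by show dist1 (v : Fin d → ℤ) (u : Fin d → ℤ) = 1; rw [dist1_comm]; exact h⟩
  loopless := ⟨fun u h => by simp [dist1] at h⟩

instance {d : ℕ} {Λ : Finset (Fin d → ℤ)} : DecidableRel (latG d Λ).Adj :=
  fun u v => decidable_of_iff (dist1 (u : Fin d → ℤ) (v : Fin d → ℤ) = 1) Iff.rfl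

/-- The nearest neighbors of a point of `ℤ^d`. -/
def nbrs {d : ℕ} (v : Fin d → ℤ) : Finset (Fin d → ℤ) :=
  (Finset.univ.image fun i : Fin d => Function.update v i (v i + 1)) ∪
    (Finset.univ.image fun i : Fin d => Function.update v i (v i - 1))

/-- The internal vertex boundary `∂_v Λ` of a finite `Λ ⊂ ℤ^d`: points of `Λ` having a
nearest neighbor outside `Λ`. -/
def vbdry {d : ℕ} (Λ : Finset (Fin d → ℤ)) : Finset (Fin d → ℤ) :=
  Λ.filter fun v => ¬ nbrs v ⊆ Λ

/-- Restriction of a field on `ℤ^d` to `Λ`. -/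
def restF {d : ℕ} (Λ : Finset (Fin d → ℤ)) (η : (Fin d → ℤ) → ℝ) : Λ → ℝ := fun v => η ↑v

/-- A subset `A ⊆ ℤ^d` viewed inside `Λ`. -/
def inΛ {d : ℕ} (Λ A : Finset (Fin d → ℤ)) : Finset Λ :=
  Finset.univ.filter fun v => (v : Fin d → ℤ) ∈ A

/-- Thermal expectation of `f` in volume `Λ` with the spins on `A` frozen to the constant
value `τ`, at field realization `η`. -/
def thermalL (d : ℕ) (Λ : Finset (Fin d → ℤ)) (J h ε β : ℝ) (η : (Fin d → ℤ) → ℝ)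
    (A : Finset (Fin d → ℤ)) (τ : Spin) (f : (Λ → Spin) → ℝ) : ℝ :=
  thermalG (latG d Λ) J h ε β (restF Λ η) (inΛ Λ A) (fun _ => τ) f

/-- The i.i.d. standard Gaussian field on `Λ` (extended by `0` off `Λ`),
as a measure on fields on `ℤ^d`. -/
def fieldMeasure (d : ℕ) (Λ : Finset (Fin d → ℤ)) : Measure ((Fin d → ℤ) → ℝ) :=
  (Measure.pi fun _ : Λ => gaussianReal 0 1).map
    fun η v => if hv : v ∈ Λ then η ⟨v, hv⟩ else 0

/-- The spin at the origin, as an observable in volume `Λ`. -/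
def obs0 {d : ℕ} (Λ : Finset (Fin d → ℤ)) : (Λ → Spin) → ℝ :=
  fun σ => ∑ v : Λ, if (v : Fin d → ℤ) = 0 then spinR (σ v) else 0

/-- The order parameter
`m(L) = (1/2) 𝔼[⟨σ_0⟩_{Λ(L)}^+ - ⟨σ_0⟩_{Λ(L)}^-]` of the RFIM on `ℤ^d`. -/
def mOrd (d : ℕ) (J h ε β : ℝ) (L : ℕ) : ℝ :=
  ∫ η, (1/2) *
      (thermalL d (box d L) J h ε β η (vbdry (box d L)) pl (obs0 (box d L)) -
       thermalL d (box d L) J h ε β η (vbdry (box d L)) mn (obs0 (box d L)))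
    ∂ fieldMeasure d (box d L)

/-- The disagreement count
`D_{Λ₁,Λ₂}(η) = (1/2) ∑_{v ∈ Λ₁} [⟨σ_v⟩_{Λ₂}^+ - ⟨σ_v⟩_{Λ₂}^-]`. -/
def DL (d : ℕ) (Λ₁ Λ₂ : Finset (Fin d → ℤ)) (J h ε β : ℝ) (η : (Fin d → ℤ) → ℝ) : ℝ :=
  (1/2) * ∑ v : Λ₂,
    if (v : Fin d → ℤ) ∈ Λ₁ then
      thermalL d Λ₂ J h ε β η (vbdry Λ₂) pl (fun σ => spinR (σ v)) -
      thermalL d Λ₂ J h ε β η (vbdry Λ₂) mn (fun σ => spinR (σ v))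
    else 0

/-- The lattice partition function in volume `Λ` with spins constrained to `s₁` on `A₁`
and `s₂` on `A₂`. -/
def Z2L (d : ℕ) (Λ : Finset (Fin d → ℤ)) (J h ε β : ℝ) (η : (Fin d → ℤ) → ℝ)
    (A₁ A₂ : Finset (Fin d → ℤ)) (s₁ s₂ : Spin) : ℝ :=
  Z2G (latG d Λ) J h ε β (restF Λ η) (inΛ Λ A₁) (inΛ Λ A₂) s₁ s₂

/-- The lattice surface tension `T_{Λ₁,Λ₂}(η)`. -/
def surfT (d : ℕ) (Λ₁ Λ₂ : Finset (Fin d → ℤ)) (J h ε β : ℝ)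
    (η : (Fin d → ℤ) → ℝ) : ℝ :=
  β⁻¹ * Real.log
    ((Z2L d Λ₂ J h ε β η (vbdry Λ₁) (vbdry Λ₂) pl pl *
      Z2L d Λ₂ J h ε β η (vbdry Λ₁) (vbdry Λ₂) mn mn) /
     (Z2L d Λ₂ J h ε β η (vbdry Λ₁) (vbdry Λ₂) pl mn *
      Z2L d Λ₂ J h ε β η (vbdry Λ₁) (vbdry Λ₂) mn pl))

/-- Adding a uniform field of intensity `t` on `Λ`. -/
def shiftF {d : ℕ} (Λ : Finset (Fin d → ℤ)) (t : ℝ) (η : (Fin d → ℤ) → ℝ) :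
    (Fin d → ℤ) → ℝ :=
  fun v => if v ∈ Λ then η v + t else η v

end Lattice
section LatticeExtended

/-- Expectation under the product of the all-`τ` and all-`τ'` conditioned extended measures
in volume `Λ ⊂ ℤ^d`, with conditioning on `A`. -/
def extExp2L (d : ℕ) (Λ : Finset (Fin d → ℤ)) (J h ε β : ℝ) (η : (Fin d → ℤ) → ℝ)
    (A : Finset (Fin d → ℤ)) (τ τ' : Spin)
    (F : (Λ → Spin) → ((latG d Λ).edgeFinset → Mid) →
         (Λ → Spin) → ((latG d Λ).edgeFinset → Mid) → ℝ) : ℝ :=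
  extExp2 (latG d Λ) J h ε β (restF Λ η) (inΛ Λ A) (fun _ => τ) (fun _ => τ') F

/-- The annulus `𝒜_{1,2}(ℓ) = Λ(2ℓ) ∖ Λ(ℓ)` in `ℤ²`. -/
def ann (ℓ : ℕ) : Finset (Fin 2 → ℤ) := box 2 (2 * ℓ) \ box 2 ℓ

/-- The inner boundary of the annulus: its vertices with a neighbor in `Λ(ℓ)`. -/
def innerB (ℓ : ℕ) : Finset (Fin 2 → ℤ) :=
  (ann ℓ).filter fun v => (nbrs v ∩ box 2 ℓ).Nonempty

/-- The outer boundary of the annulus: its vertices with a neighbor outside `Λ(2ℓ)`. -/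
def outerB (ℓ : ℕ) : Finset (Fin 2 → ℤ) :=
  (ann ℓ).filter fun v => ¬ nbrs v ⊆ box 2 (2 * ℓ)

/-- The event that the (extended) annulus `𝒜_{1,2}(ℓ)` is crossed by a path of the
disagreement set of length (number of steps) at most `n`. -/
def crossPred (ℓ : ℕ) (n : ℝ)
    (σ : (ann ℓ) → Spin) (κ : (latG 2 (ann ℓ)).edgeFinset → Mid)
    (σ' : (ann ℓ) → Spin) (κ' : (latG 2 (ann ℓ)).edgeFinset → Mid) : Prop :=
  ∃ (a b : (ann ℓ : Finset (Fin 2 → ℤ))), (a : Fin 2 → ℤ) ∈ innerB ℓ ∧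
    (b : Fin 2 → ℤ) ∈ outerB ℓ ∧
    ∃ w : (extGraph (latG 2 (ann ℓ))).Walk (Sum.inl a) (Sum.inl b),
      (∀ z ∈ w.support, z ∈ DisSet σ κ σ' κ') ∧ (w.length : ℝ) ≤ n

/-- The annealed probability that the annulus `𝒜_{1,2}(ℓ)` is crossed by a disagreement
path of length at most `n`, under `plus/minus` boundary conditions on `∂_v 𝒜_{1,2}(ℓ)`. -/
def crossProb (J h ε β : ℝ) (ℓ : ℕ) (n : ℝ) : ℝ :=
  ∫ η, extExp2L 2 (ann ℓ) J h ε β η (vbdry (ann ℓ)) pl mn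
      (fun σ κ σ' κ' => if crossPred ℓ n σ κ σ' κ' then 1 else 0)
    ∂ fieldMeasure 2 (ann ℓ)

end LatticeExtended
section Lasso

/-- An extended vertex of `Λ̄` lies in the (extended) annulus `Λ(8ℓ) ∖ Λ(ℓ)`. -/
def extInAnn (ℓ : ℕ) (Λ : Finset (Fin 2 → ℤ)) :
    (Λ ⊕ (latG 2 Λ).edgeFinset) → Prop
  | Sum.inl v => (v : Fin 2 → ℤ) ∈ box 2 (8 * ℓ) \ box 2 ℓ
  | Sum.inr e => ∀ u ∈ (e : Sym2 (Λ : Finset (Fin 2 → ℤ))),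
      (u : Fin 2 → ℤ) ∈ box 2 (8 * ℓ) \ box 2 ℓ

/-- The lasso event `𝓛(ℓ)`: the union of connected components of the disagreement set in
`Λ̄(25ℓ)` meeting `∂_v Λ(25ℓ)` contains a circuit lying in the annulus `Λ(8ℓ) ∖ Λ(ℓ)`
which surrounds the inner hole (i.e. meets every extended path from `Λ(ℓ)` to
`∂_v Λ(25ℓ)`). -/
def lassoPred (ℓ : ℕ)
    (σ : (box 2 (25 * ℓ)) → Spin) (κ : (latG 2 (box 2 (25 * ℓ))).edgeFinset → Mid)
    (σ' : (box 2 (25 * ℓ)) → Spin) (κ' : (latG 2 (box 2 (25 * ℓ))).edgeFinset → Mid) :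
    Prop :=
  ∃ (x : (box 2 (25 * ℓ) : Finset (Fin 2 → ℤ)) ⊕ (latG 2 (box 2 (25 * ℓ))).edgeFinset)
    (w : (extGraph (latG 2 (box 2 (25 * ℓ)))).Walk x x),
      0 < w.length ∧
      (∀ z ∈ w.support, z ∈ DisSet σ κ σ' κ' ∧ extInAnn ℓ (box 2 (25 * ℓ)) z) ∧
      (∃ b : (box 2 (25 * ℓ) : Finset (Fin 2 → ℤ)), (b : Fin 2 → ℤ) ∈ vbdry (box 2 (25 * ℓ)) ∧
        ConnectedIn (extGraph (latG 2 (box 2 (25 * ℓ)))) (DisSet σ κ σ' κ') x (Sum.inl b)) ∧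
      (∀ (v b : (box 2 (25 * ℓ) : Finset (Fin 2 → ℤ))),
        (v : Fin 2 → ℤ) ∈ box 2 ℓ → (b : Fin 2 → ℤ) ∈ vbdry (box 2 (25 * ℓ)) →
        ∀ q : (extGraph (latG 2 (box 2 (25 * ℓ)))).Walk (Sum.inl v) (Sum.inl b),
          ∃ z ∈ q.support, z ∈ w.support)

/-- The quenched probability of the lasso event `𝓛(ℓ)` under the plus/minus product of
extended measures in `Λ(25ℓ)` with boundary conditions on `∂_v Λ(25ℓ)`. -/
def lassoExpect (J h ε β : ℝ) (ℓ : ℕ) (η : (Fin 2 → ℤ) → ℝ) : ℝ :=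
  extExp2L 2 (box 2 (25 * ℓ)) J h ε β η (vbdry (box 2 (25 * ℓ))) pl mn
    (fun σ κ σ' κ' => if lassoPred ℓ σ κ σ' κ' then 1 else 0)

/-- The annealed probability of the lasso event `𝓛(ℓ)`. -/
def lassoProb (J h ε β : ℝ) (ℓ : ℕ) : ℝ :=
  ∫ η, lassoExpect J h ε β ℓ η ∂ fieldMeasure 2 (box 2 (25 * ℓ))

end Lasso
section Rectangles

/-- Embedding of `ℤ²` into `ℝ²`. -/
def embL (v : Fin 2 → ℤ) : ℝ × ℝ := ((v 0 : ℝ), (v 1 : ℝ))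

/-- Embedding of the extended lattice into `ℝ²`: vertices to lattice points, midpoints of
edges to the midpoints of the corresponding segments. -/
def embEV {Λ : Finset (Fin 2 → ℤ)} :
    (Λ ⊕ (latG 2 Λ).edgeFinset) → ℝ × ℝ
  | Sum.inl v => embL (v : Fin 2 → ℤ)
  | Sum.inr e =>
      Sym2.lift ⟨fun u w : (Λ : Finset (Fin 2 → ℤ)) =>
          ((1 : ℝ) / 2) • (embL (u : Fin 2 → ℤ) + embL (w : Fin 2 → ℤ)),
        fun a b => by
          show ((1 : ℝ) / 2) • (embL (a : Fin 2 → ℤ) + embL (b : Fin 2 → ℤ)) =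
            ((1 : ℝ) / 2) • (embL (b : Fin 2 → ℤ) + embL (a : Fin 2 → ℤ))
          rw [add_comm]⟩ (e : Sym2 (Λ : Finset (Fin 2 → ℤ)))

/-- The union of the connected components of the disagreement set meeting `∂_v Λ`. -/
def bdryComp (Λ : Finset (Fin 2 → ℤ))
    (σ : Λ → Spin) (κ : (latG 2 Λ).edgeFinset → Mid)
    (σ' : Λ → Spin) (κ' : (latG 2 Λ).edgeFinset → Mid) :
    Set (Λ ⊕ (latG 2 Λ).edgeFinset) :=
  {z | ∃ b : (Λ : Finset (Fin 2 → ℤ)), (b : Fin 2 → ℤ) ∈ vbdry Λ ∧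
    ConnectedIn (extGraph (latG 2 Λ)) (DisSet σ κ σ' κ') z (Sum.inl b)}

/-- The polygonal curve in `ℝ²` associated with `𝒞_{∂_v Λ}`: the union of the straight
segments between embedded adjacent extended vertices of `𝒞_{∂_v Λ}`. -/
def curveSet (Λ : Finset (Fin 2 → ℤ))
    (σ : Λ → Spin) (κ : (latG 2 Λ).edgeFinset → Mid)
    (σ' : Λ → Spin) (κ' : (latG 2 Λ).edgeFinset → Mid) : Set (ℝ × ℝ) :=
  ⋃ (z ∈ bdryComp Λ σ κ σ' κ') (z' ∈ bdryComp Λ σ κ σ' κ')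
      (_ : (extGraph (latG 2 Λ)).Adj z z'),
    segment ℝ (embEV z) (embEV z')

/-- A rectangle in `ℝ²` of arbitrary orientation: a corner, a unit direction of the short
side, and the short side length `w` (the long side has length `5w`). -/
structure Rect where
  corner : ℝ × ℝ
  dir : ℝ × ℝ
  w : ℝ

/-- Rotation of a vector of `ℝ²` by `π/2`. -/
def perp (x : ℝ × ℝ) : ℝ × ℝ := (-x.2, x.1)

/-- The closed rectangle determined by the data of `R`. -/
def Rect.carrier (R : Rect) : Set (ℝ × ℝ) :=
  {x | ∃ s t : ℝ, 0 ≤ s ∧ s ≤ R.w ∧ 0 ≤ t ∧ t ≤ 5 * R.w ∧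
    x = R.corner + s • R.dir + t • perp R.dir}

/-- One of the two short sides of `R`. -/
def Rect.sideA (R : Rect) : Set (ℝ × ℝ) :=
  {x | ∃ s : ℝ, 0 ≤ s ∧ s ≤ R.w ∧ x = R.corner + s • R.dir}

/-- The other short side of `R`. -/
def Rect.sideB (R : Rect) : Set (ℝ × ℝ) :=
  {x | ∃ s : ℝ, 0 ≤ s ∧ s ≤ R.w ∧ x = R.corner + s • R.dir + (5 * R.w) • perp R.dir}

/-- The event `Cross(R)`: the curve associated to `𝒞_{∂_v Λ}` contains a continuous path,
staying in `R`, which connects the two short sides of `R`. -/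
def CrossR (Λ : Finset (Fin 2 → ℤ)) (R : Rect)
    (σ : Λ → Spin) (κ : (latG 2 Λ).edgeFinset → Mid)
    (σ' : Λ → Spin) (κ' : (latG 2 Λ).edgeFinset → Mid) : Prop :=
  ∃ γ : ℝ → ℝ × ℝ, ContinuousOn γ (Set.Icc 0 1) ∧
    (∀ t ∈ Set.Icc (0 : ℝ) 1, γ t ∈ curveSet Λ σ κ σ' κ' ∩ R.carrier) ∧
    γ 0 ∈ R.sideA ∧ γ 1 ∈ R.sideB

/-- A collection of rectangles is well-separated (at scale `ℓ`) if each has unit direction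
vector, aspect ratio `1 × 5` with `10 ≤ ℓ(R) ≤ ℓ/160`, lies in the open `ℓ¹`-annulus of radii
`(5/4)ℓ, (7/4)ℓ`, and distinct rectangles are at mutual `ℓ¹` distance at least
`60·max(ℓ(R₁), ℓ(R₂))`. -/
def WellSeparated (ℓ : ℕ) (ℛ : Finset Rect) : Prop :=
  ∀ R ∈ ℛ, (R.dir.1 ^ 2 + R.dir.2 ^ 2 = 1) ∧
    (10 ≤ R.w ∧ R.w ≤ (ℓ : ℝ) / 160) ∧
    (R.carrier ⊆ {x : ℝ × ℝ | 5 / 4 * (ℓ : ℝ) < |x.1| + |x.2| ∧ |x.1| + |x.2| < 7 / 4 * (ℓ : ℝ)}) ∧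
    ∀ R' ∈ ℛ, R ≠ R' → ∀ p ∈ R.carrier, ∀ q ∈ Rect.carrier R',
      60 * max R.w R'.w ≤ |p.1 - q.1| + |p.2 - q.2|

end Rectangles
section NonAnticipatory

variable {V : Type} [Fintype V] [DecidableEq V]

/-- The extended vertices of `Λ̄`: vertices of `Λ` and midpoints of edges with both
endpoints in `Λ`. -/
def extVerts (G : SimpleGraph V) [DecidableRel G.Adj] (Λ : Finset V) :
    Set (V ⊕ G.edgeFinset) :=
  {z | match z with
    | Sum.inl v => v ∈ Λ
    | Sum.inr e => ∀ u ∈ (e : Sym2 V), u ∈ Λ}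

/-- The forward set `S_F` of `S`: extended vertices outside `S` admitting a path of the
extended graph to `∂_v Λ₁` which is disjoint from `S`. -/
def fwdSet (G : SimpleGraph V) [DecidableRel G.Adj] (Λ₁ : Finset V)
    (S : Set (V ⊕ G.edgeFinset)) : Set (V ⊕ G.edgeFinset) :=
  {u | u ∉ S ∧ ∃ a : V, a ∈ vbdryG G Λ₁ ∧
    ∃ p : (extGraph G).Walk u (Sum.inl a), ∀ z ∈ p.support, z ∉ S}

/-- The backward set `S_B`: the complement of `S_F` in the extended vertex set of `Λ̄₂`. -/
def bwdSet (G : SimpleGraph V) [DecidableRel G.Adj] (Λ₁ Λ₂ : Finset V)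
    (S : Set (V ⊕ G.edgeFinset)) : Set (V ⊕ G.edgeFinset) :=
  extVerts G Λ₂ \ fwdSet G Λ₁ S

/-- `S` is a separating set (between `∂_v Λ₁` and `∂_v Λ₂`). -/
def Separating (G : SimpleGraph V) [DecidableRel G.Adj] (Λ₁ Λ₂ : Finset V)
    (S : Set (V ⊕ G.edgeFinset)) : Prop :=
  (∀ a ∈ vbdryG G Λ₁, Sum.inl a ∈ fwdSet G Λ₁ S) ∧
  (∀ b ∈ vbdryG G Λ₂, Sum.inl b ∈ bwdSet G Λ₁ Λ₂ S)

/-- A random set `𝒮` (a function of the pair of extended configurations) is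
non-anticipatory if, for every deterministic `S`, the event `{𝒮 = S}` is determined by
the restriction of the pair of configurations to `S_B`. -/
def NonAnticipatory (G : SimpleGraph V) [DecidableRel G.Adj] (Λ₁ Λ₂ : Finset V)
    (𝒮 : (V → Spin) → (G.edgeFinset → Mid) → (V → Spin) → (G.edgeFinset → Mid) →
      Set (V ⊕ G.edgeFinset)) : Prop :=
  ∀ (S : Set (V ⊕ G.edgeFinset))
    (σ₁ : V → Spin) (κ₁ : G.edgeFinset → Mid) (σ₁' : V → Spin) (κ₁' : G.edgeFinset → Mid)
    (σ₂ : V → Spin) (κ₂ : G.edgeFinset → Mid) (σ₂' : V → Spin) (κ₂' : G.edgeFinset → Mid),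
    (∀ z ∈ bwdSet G Λ₁ Λ₂ S,
      extConf σ₁ κ₁ z = extConf σ₂ κ₂ z ∧ extConf σ₁' κ₁' z = extConf σ₂' κ₂' z) →
    (𝒮 σ₁ κ₁ σ₁' κ₁' = S ↔ 𝒮 σ₂ κ₂ σ₂' κ₂' = S)

end NonAnticipatory
section Misc

variable {V : Type} [Fintype V] [DecidableEq V]

/-- `𝒞_S`: the union of the connected components of the disagreement set meeting
`{Sum.inl s : s ∈ S}`. -/
def compS (G : SimpleGraph V) [DecidableRel G.Adj] (S : Finset V)
    (σ : V → Spin) (κ : G.edgeFinset → Mid) (σ' : V → Spin) (κ' : G.edgeFinset → Mid) :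
    Set (V ⊕ G.edgeFinset) :=
  {z | ∃ s ∈ S, ConnectedIn (extGraph G) (DisSet σ κ σ' κ') z (Sum.inl s)}

/-- The swap map `R_S^A`: if `𝒞_S` meets `A` it is the identity, and otherwise it
exchanges the two configurations on `𝒞_S`. -/
def Rswap (G : SimpleGraph V) [DecidableRel G.Adj] (A S : Finset V)
    (σ : V → Spin) (κ : G.edgeFinset → Mid) (σ' : V → Spin) (κ' : G.edgeFinset → Mid) :
    ((V → Spin) × (G.edgeFinset → Mid)) × ((V → Spin) × (G.edgeFinset → Mid)) :=
  if ∃ a ∈ A, Sum.inl a ∈ compS G S σ κ σ' κ' then ((σ, κ), (σ', κ'))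
  else
    (((fun v => if Sum.inl v ∈ compS G S σ κ σ' κ' then σ' v else σ v),
      (fun e => if Sum.inr e ∈ compS G S σ κ σ' κ' then κ' e else κ e)),
     ((fun v => if Sum.inl v ∈ compS G S σ κ σ' κ' then σ v else σ' v),
      (fun e => if Sum.inr e ∈ compS G S σ κ σ' κ' then κ e else κ' e)))

/-- The number of vertices of `Λ₁` belonging to `𝒞_{∂_v Λ₂}`, i.e. `|Λ₁ ∩ 𝒞_{∂_v Λ₂}|`. -/
def connCount (Λ₁ Λ₂ : Finset (Fin 2 → ℤ))
    (σ : Λ₂ → Spin) (κ : (latG 2 Λ₂).edgeFinset → Mid)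
    (σ' : Λ₂ → Spin) (κ' : (latG 2 Λ₂).edgeFinset → Mid) : ℝ :=
  ∑ v : (Λ₂ : Finset (Fin 2 → ℤ)),
    if (v : Fin 2 → ℤ) ∈ Λ₁ ∧
        (∃ b : (Λ₂ : Finset (Fin 2 → ℤ)), (b : Fin 2 → ℤ) ∈ vbdry Λ₂ ∧
          ConnectedIn (extGraph (latG 2 Λ₂)) (DisSet σ κ σ' κ') (Sum.inl v) (Sum.inl b))
    then 1 else 0

/-- The standard Gaussian density `φ`. -/
def stdGauss (u : ℝ) : ℝ := (Real.sqrt (2 * Real.pi))⁻¹ * Real.exp (-(u ^ 2 / 2))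

/-- The two-sided standard Gaussian tail `χ(s) = 2 ∫_s^∞ φ(u) du`. -/
def chi (s : ℝ) : ℝ := 2 * ∫ u in Set.Ioi s, stdGauss u

/-- The translate `v + Λ` of a finite subset of `ℤ²`. -/
def trF {d : ℕ} (v : Fin d → ℤ) (Λ : Finset (Fin d → ℤ)) : Finset (Fin d → ℤ) :=
  Λ.image fun x => v + x

end Misc
section AuxProof
set_option linter.unusedSectionVars false

variable {V : Type} [Fintype V] [DecidableEq V]

lemma spin_cases (s : Spin) : s = mn ∨ s = pl := by
  rcases s with ⟨v, hv⟩
  simp only [Finset.mem_insert, Finset.mem_singleton] at hv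
  rcases hv with h | h
  · left; exact Subtype.ext h
  · right; exact Subtype.ext h

lemma spinR_le_one (s : Spin) : spinR s ≤ 1 := by
  rcases spin_cases s with h | h <;> subst h <;> norm_num [spinR, mn, pl]

lemma neg_one_le_spinR (s : Spin) : -1 ≤ spinR s := by
  rcases spin_cases s with h | h <;> subst h <;> norm_num [spinR, mn, pl]

lemma spinR_of_ne_pl {s : Spin} (h : s ≠ pl) : spinR s = -1 := by
  rcases spin_cases s with h' | h'
  · subst h'; norm_num [spinR, mn]
  · exact absurd h' h

lemma spinR_of_ne_mn {s : Spin} (h : s ≠ mn) : spinR s = 1 := by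
  rcases spin_cases s with h' | h'
  · exact absurd h' h
  · subst h'; norm_num [spinR, pl]

/-- Swap two configurations on a set `D`. -/
def swapOn (D : Finset V) (σ σ' : V → Spin) : V → Spin := fun v => if v ∈ D then σ' v else σ v

lemma swapOn_mem {D : Finset V} {σ σ' : V → Spin} {v : V} (hv : v ∈ D) :
    swapOn D σ σ' v = σ' v := if_pos hv

lemma swapOn_not_mem {D : Finset V} {σ σ' : V → Spin} {v : V} (hv : v ∉ D) :
    swapOn D σ σ' v = σ v := if_neg hv

lemma edgeE_mk (J : ℝ) (σ : V → Spin) (u v : V) :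
    edgeE J σ s(u, v) = J * spinR (σ u) * spinR (σ v) := rfl

lemma hamG_swap_add (G : SimpleGraph V) [DecidableRel G.Adj] (J h ε : ℝ) (η : V → ℝ)
    (D : Finset V) (σ σ' : V → Spin)
    (hagree : ∀ u v : V, G.Adj u v → u ∈ D → v ∉ D → σ v = σ' v) :
    hamG G J h ε η (swapOn D σ σ') + hamG G J h ε η (swapOn D σ' σ) =
      hamG G J h ε η σ + hamG G J h ε η σ' := by
  have hedge : ∀ e ∈ G.edgeFinset,
      edgeE J (swapOn D σ σ') e + edgeE J (swapOn D σ' σ) e = edgeE J σ e + edgeE J σ' e := by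
    intro e he
    rw [SimpleGraph.mem_edgeFinset] at he
    induction e using Sym2.ind with
    | _ u v =>
      have hadj : G.Adj u v := he
      simp only [edgeE_mk]
      by_cases hu : u ∈ D <;> by_cases hv : v ∈ D
      · rw [swapOn_mem hu, swapOn_mem hv, swapOn_mem hu, swapOn_mem hv]; ring
      · have hvv := hagree u v hadj hu hv
        rw [swapOn_mem hu, swapOn_not_mem hv, swapOn_mem hu, swapOn_not_mem hv, hvv]; ring
      · have huu := hagree v u hadj.symm hv hu
        rw [swapOn_not_mem hu, swapOn_mem hv, swapOn_not_mem hu, swapOn_mem hv, huu]; ring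
      · rw [swapOn_not_mem hu, swapOn_not_mem hv, swapOn_not_mem hu, swapOn_not_mem hv]
  have hvert : ∀ v : V,
      (h + ε * η v) * spinR (swapOn D σ σ' v) + (h + ε * η v) * spinR (swapOn D σ' σ v) =
      (h + ε * η v) * spinR (σ v) + (h + ε * η v) * spinR (σ' v) := by
    intro v
    by_cases hv : v ∈ D
    · rw [swapOn_mem hv, swapOn_mem hv]; ring
    · rw [swapOn_not_mem hv, swapOn_not_mem hv]
  have he2 : ∑ e ∈ G.edgeFinset, edgeE J (swapOn D σ σ') e +
      ∑ e ∈ G.edgeFinset, edgeE J (swapOn D σ' σ) e =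
      ∑ e ∈ G.edgeFinset, edgeE J σ e + ∑ e ∈ G.edgeFinset, edgeE J σ' e := by
    rw [← Finset.sum_add_distrib, ← Finset.sum_add_distrib]
    exact Finset.sum_congr rfl hedge
  have hv2 : ∑ v, (h + ε * η v) * spinR (swapOn D σ σ' v) +
      ∑ v, (h + ε * η v) * spinR (swapOn D σ' σ v) =
      ∑ v, (h + ε * η v) * spinR (σ v) + ∑ v, (h + ε * η v) * spinR (σ' v) := by
    rw [← Finset.sum_add_distrib, ← Finset.sum_add_distrib]
    exact Finset.sum_congr rfl fun v _ => hvert v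
  unfold hamG
  linarith

lemma Z2G_swap (G : SimpleGraph V) [DecidableRel G.Adj] (J h ε β : ℝ) (η : V → ℝ)
    (P B1 B2 : Finset V) (hB1P : B1 ⊆ P) (hB2P : ∀ v ∈ B2, v ∉ P)
    (hsep : ∀ u v : V, G.Adj u v → u ∈ P → u ∉ B1 → v ∈ P)
    (s₁ s₂ s₂' : Spin) :
    Z2G G J h ε β η B1 B2 s₁ s₂ * Z2G G J h ε β η P B2 s₁ s₂' =
    Z2G G J h ε β η P B2 s₁ s₂ * Z2G G J h ε β η B1 B2 s₁ s₂' := by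
  classical
  set D : Finset V := P \ B1 with hD
  have hDmem : ∀ v : V, v ∈ D ↔ v ∈ P ∧ v ∉ B1 := fun v => Finset.mem_sdiff
  have hmemB1 : ∀ v ∈ B1, v ∉ D := fun v hv hvD => ((hDmem v).1 hvD).2 hv
  have hmemB2 : ∀ v ∈ B2, v ∉ D := fun v hv hvD => hB2P v hv ((hDmem v).1 hvD).1
  have hPD : ∀ v, v ∈ P → v ∉ D → v ∈ B1 := by
    intro v hvP hvD
    by_contra hvB1
    exact hvD ((hDmem v).2 ⟨hvP, hvB1⟩)
  set w : (V → Spin) → ℝ := fun σ => Real.exp (-(β * hamG G J h ε η σ)) with hw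
  set C1 : (V → Spin) → Prop := fun σ => (∀ v ∈ B1, σ v = s₁) ∧ (∀ v ∈ B2, σ v = s₂) with hC1
  set C2 : (V → Spin) → Prop := fun σ => (∀ v ∈ P, σ v = s₁) ∧ (∀ v ∈ B2, σ v = s₂') with hC2
  set C3 : (V → Spin) → Prop := fun σ => (∀ v ∈ P, σ v = s₁) ∧ (∀ v ∈ B2, σ v = s₂) with hC3
  set C4 : (V → Spin) → Prop := fun σ => (∀ v ∈ B1, σ v = s₁) ∧ (∀ v ∈ B2, σ v = s₂') with hC4
  have key : ∀ σ σ' : V → Spin,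
      (if C1 σ then w σ else 0) * (if C2 σ' then w σ' else 0) =
      (if C3 (swapOn D σ σ') then w (swapOn D σ σ') else 0) *
        (if C4 (swapOn D σ' σ) then w (swapOn D σ' σ) else 0) := by
    intro σ σ'
    have hiff : (C1 σ ∧ C2 σ') ↔ (C3 (swapOn D σ σ') ∧ C4 (swapOn D σ' σ)) := by
      constructor
      · rintro ⟨⟨h11, h12⟩, h21, h22⟩
        refine ⟨⟨fun v hv => ?_, fun v hv => ?_⟩, ⟨fun v hv => ?_, fun v hv => ?_⟩⟩
        · by_cases hvD : v ∈ D
          · rw [swapOn_mem hvD]; exact h21 v hv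
          · rw [swapOn_not_mem hvD]; exact h11 v (hPD v hv hvD)
        · rw [swapOn_not_mem (hmemB2 v hv)]; exact h12 v hv
        · rw [swapOn_not_mem (hmemB1 v hv)]; exact h21 v (hB1P hv)
        · rw [swapOn_not_mem (hmemB2 v hv)]; exact h22 v hv
      · rintro ⟨⟨h31, h32⟩, h41, h42⟩
        refine ⟨⟨fun v hv => ?_, fun v hv => ?_⟩, ⟨fun v hv => ?_, fun v hv => ?_⟩⟩
        · have := h31 v (hB1P hv); rwa [swapOn_not_mem (hmemB1 v hv)] at this
        · have := h32 v hv; rwa [swapOn_not_mem (hmemB2 v hv)] at this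
        · by_cases hvD : v ∈ D
          · have := h31 v ((hDmem v).1 hvD).1; rwa [swapOn_mem hvD] at this
          · have hvB1 : v ∈ B1 := hPD v hv hvD
            have := h41 v hvB1; rwa [swapOn_not_mem (hmemB1 v hvB1)] at this
        · have := h42 v hv; rwa [swapOn_not_mem (hmemB2 v hv)] at this
    by_cases hc : C1 σ ∧ C2 σ'
    · have hc' := hiff.1 hc
      rw [if_pos hc.1, if_pos hc.2, if_pos hc'.1, if_pos hc'.2]
      have hagree : ∀ u v : V, G.Adj u v → u ∈ D → v ∉ D → σ v = σ' v := by
        intro u v hadj huD hvD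
        have huP : u ∈ P := ((hDmem u).1 huD).1
        have huB1 : u ∉ B1 := ((hDmem u).1 huD).2
        have hvP : v ∈ P := hsep u v hadj huP huB1
        have hvB1 : v ∈ B1 := hPD v hvP hvD
        rw [hc.1.1 v hvB1, hc.2.1 v hvP]
      have hham := hamG_swap_add G J h ε η D σ σ' hagree
      simp only [hw, ← Real.exp_add]
      congr 1
      linear_combination β * hham
    · have hc' : ¬ (C3 (swapOn D σ σ') ∧ C4 (swapOn D σ' σ)) := fun hh => hc (hiff.2 hh)
      have l0 : (if C1 σ then w σ else 0) * (if C2 σ' then w σ' else 0) = 0 := by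
        by_cases h1 : C1 σ
        · rw [if_neg (fun h2 => hc ⟨h1, h2⟩), mul_zero]
        · rw [if_neg h1, zero_mul]
      have r0 : (if C3 (swapOn D σ σ') then w (swapOn D σ σ') else 0) *
          (if C4 (swapOn D σ' σ) then w (swapOn D σ' σ) else 0) = 0 := by
        by_cases h3 : C3 (swapOn D σ σ')
        · rw [if_neg (fun h4 => hc' ⟨h3, h4⟩), mul_zero]
        · rw [if_neg h3, zero_mul]
      rw [l0, r0]
  have hinv : Function.Involutive
      (fun p : (V → Spin) × (V → Spin) => (swapOn D p.1 p.2, swapOn D p.2 p.1)) := by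
    intro p
    refine Prod.ext (funext fun v => ?_) (funext fun v => ?_) <;> by_cases hv : v ∈ D <;>
      simp [swapOn, hv]
  have hZ : ∀ (A : Finset V) (sa sb : Spin), Z2G G J h ε β η A B2 sa sb =
      ∑ σ : V → Spin, if (∀ v ∈ A, σ v = sa) ∧ (∀ v ∈ B2, σ v = sb) then w σ else 0 :=
    fun _ _ _ => rfl
  rw [hZ, hZ, hZ, hZ, Finset.sum_mul_sum, Finset.sum_mul_sum]
  rw [← Fintype.sum_prod_type', ← Fintype.sum_prod_type']
  calc
    ∑ p : (V → Spin) × (V → Spin), (if C1 p.1 then w p.1 else 0) * (if C2 p.2 then w p.2 else 0)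
        = ∑ p : (V → Spin) × (V → Spin),
          (if C3 (swapOn D p.1 p.2) then w (swapOn D p.1 p.2) else 0) *
            (if C4 (swapOn D p.2 p.1) then w (swapOn D p.2 p.1) else 0) :=
      Finset.sum_congr rfl fun p _ => key p.1 p.2
    _ = ∑ p : (V → Spin) × (V → Spin), (if C3 p.1 then w p.1 else 0) * (if C4 p.2 then w p.2 else 0) :=
      Equiv.sum_comp (Function.Involutive.toPerm _ hinv)
        (fun p => (if C3 p.1 then w p.1 else 0) * (if C4 p.2 then w p.2 else 0))

lemma Z2G_pos (G : SimpleGraph V) [DecidableRel G.Adj] (J h ε β : ℝ) (η : V → ℝ)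
    (A₁ A₂ : Finset V) (hdisj : ∀ v ∈ A₂, v ∉ A₁) (s₁ s₂ : Spin) :
    0 < Z2G G J h ε β η A₁ A₂ s₁ s₂ := by
  classical
  unfold Z2G
  refine Finset.sum_pos' (fun σ _ => by positivity) ?_
  refine ⟨fun v => if v ∈ A₁ then s₁ else s₂, Finset.mem_univ _, ?_⟩
  rw [if_pos ⟨fun v hv => if_pos hv, fun v hv => if_neg (hdisj v hv)⟩]
  positivity

end AuxProof

section AuxAnalytic
open scoped Topology
set_option linter.unusedSectionVars false

variable {V : Type} [Fintype V] [DecidableEq V]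

/-- Total spin on `P`. -/
def mS (P : Finset V) (σ : V → Spin) : ℝ := ∑ v ∈ P, spinR (σ v)

lemma mS_le (P : Finset V) (σ : V → Spin) : mS P σ ≤ (P.card : ℝ) := by
  have := Finset.sum_le_sum (fun v (_ : v ∈ P) => spinR_le_one (σ v))
  simpa [mS] using this

lemma neg_le_mS (P : Finset V) (σ : V → Spin) : -(P.card : ℝ) ≤ mS P σ := by
  have := Finset.sum_le_sum (fun v (_ : v ∈ P) => neg_one_le_spinR (σ v))
  simpa [mS] using this

lemma mS_eq_card_iff (P : Finset V) (σ : V → Spin) :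
    mS P σ = (P.card : ℝ) ↔ ∀ v ∈ P, σ v = pl := by
  constructor
  · intro hm
    by_contra hno
    push_neg at hno
    obtain ⟨v, hvP, hv⟩ := hno
    have hlt : mS P σ < ∑ _v ∈ P, (1 : ℝ) := by
      refine Finset.sum_lt_sum (fun u (_ : u ∈ P) => spinR_le_one (σ u)) ⟨v, hvP, ?_⟩
      rw [spinR_of_ne_pl hv]; norm_num
    rw [Finset.sum_const, nsmul_eq_mul, mul_one] at hlt
    linarith [hm ▸ hlt]
  · intro hall
    have : ∀ v ∈ P, spinR (σ v) = 1 := fun v hv => by rw [hall v hv]; simp [spinR, pl]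
    rw [mS, Finset.sum_congr rfl this, Finset.sum_const, nsmul_eq_mul, mul_one]

lemma mS_eq_neg_card_iff (P : Finset V) (σ : V → Spin) :
    mS P σ = -(P.card : ℝ) ↔ ∀ v ∈ P, σ v = mn := by
  constructor
  · intro hm
    by_contra hno
    push_neg at hno
    obtain ⟨v, hvP, hv⟩ := hno
    have hlt : ∑ _v ∈ P, (-1 : ℝ) < mS P σ := by
      refine Finset.sum_lt_sum (fun u (_ : u ∈ P) => neg_one_le_spinR (σ u)) ⟨v, hvP, ?_⟩
      rw [spinR_of_ne_mn hv]; norm_num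
    rw [Finset.sum_const, nsmul_eq_mul, mul_neg_one] at hlt
    linarith [hm ▸ hlt]
  · intro hall
    have : ∀ v ∈ P, spinR (σ v) = -1 := fun v hv => by rw [hall v hv]; simp [spinR, mn]
    rw [mS, Finset.sum_congr rfl this, Finset.sum_const, nsmul_eq_mul, mul_neg_one]

/-- The partition function with uniform extra field of strength `t` on `P`. -/
def Zt (G : SimpleGraph V) [DecidableRel G.Adj] (J h ε β : ℝ) (η : V → ℝ)
    (P B2 : Finset V) (s : Spin) (t : ℝ) : ℝ :=
  ∑ σ : V → Spin, if ∀ v ∈ B2, σ v = s then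
    Real.exp (-(β * hamG G J h ε η σ)) * Real.exp (β * ε * mS P σ * t) else 0

/-- The corresponding numerator for the expectation of the total spin of `P`. -/
def Nt (G : SimpleGraph V) [DecidableRel G.Adj] (J h ε β : ℝ) (η : V → ℝ)
    (P B2 : Finset V) (s : Spin) (t : ℝ) : ℝ :=
  ∑ σ : V → Spin, if ∀ v ∈ B2, σ v = s then
    mS P σ * (Real.exp (-(β * hamG G J h ε η σ)) * Real.exp (β * ε * mS P σ * t)) else 0

variable (G : SimpleGraph V) [DecidableRel G.Adj] (J h ε β : ℝ) (η : V → ℝ)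
  (P B2 : Finset V) (s : Spin)

lemma Zt_pos (t : ℝ) : 0 < Zt G J h ε β η P B2 s t := by
  classical
  refine Finset.sum_pos' (fun σ _ => by positivity) ⟨fun _ => s, Finset.mem_univ _, ?_⟩
  rw [if_pos (fun v _ => rfl)]
  positivity

lemma ham_shift (t : ℝ) (σ : V → Spin) :
    hamG G J h ε (fun v => η v + if v ∈ P then t else 0) σ =
      hamG G J h ε η σ - ε * mS P σ * t := by
  unfold hamG
  have hv : ∑ v, (h + ε * (η v + if v ∈ P then t else 0)) * spinR (σ v) =
      ∑ v, (h + ε * η v) * spinR (σ v) + ε * mS P σ * t := by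
    have step : ∀ v : V, (h + ε * (η v + if v ∈ P then t else 0)) * spinR (σ v) =
        (h + ε * η v) * spinR (σ v) + (if v ∈ P then ε * spinR (σ v) * t else 0) := by
      intro v; by_cases hv : v ∈ P <;> simp [hv] <;> ring
    rw [Finset.sum_congr rfl fun v _ => step v, Finset.sum_add_distrib]
    congr 1
    rw [Finset.sum_ite_mem, Finset.univ_inter, mS, Finset.mul_sum, Finset.sum_mul]
  rw [hv]; ring

lemma ZG_shift (t : ℝ) :
    ZG G J h ε β (fun v => η v + if v ∈ P then t else 0) B2 (fun _ => s) =
      Zt G J h ε β η P B2 s t := by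
  unfold ZG Zt
  refine Finset.sum_congr rfl fun σ _ => ?_
  by_cases hc : ∀ v ∈ B2, σ v = s
  · rw [if_pos hc, if_pos hc, ham_shift, ← Real.exp_add]
    congr 1; ring
  · rw [if_neg hc, if_neg hc]

lemma Zt_hasDerivAt (t : ℝ) :
    HasDerivAt (fun u => Zt G J h ε β η P B2 s u) (β * ε * Nt G J h ε β η P B2 s t) t := by
  classical
  have hterm : ∀ σ : V → Spin,
      HasDerivAt (fun u => if ∀ v ∈ B2, σ v = s then
          Real.exp (-(β * hamG G J h ε η σ)) * Real.exp (β * ε * mS P σ * u) else 0)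
        (if ∀ v ∈ B2, σ v = s then
          β * ε * (mS P σ * (Real.exp (-(β * hamG G J h ε η σ)) *
            Real.exp (β * ε * mS P σ * t))) else 0) t := by
    intro σ
    by_cases hc : ∀ v ∈ B2, σ v = s
    · simp only [if_pos hc]
      have h1 : HasDerivAt (fun u : ℝ => β * ε * mS P σ * u) (β * ε * mS P σ) t := by
        simpa using (hasDerivAt_id t).const_mul (β * ε * mS P σ)
      have h2 := (h1.exp).const_mul (Real.exp (-(β * hamG G J h ε η σ)))
      refine h2.congr_deriv (Eq.symm ?_)
      ring
    · simp only [if_neg hc]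
      exact hasDerivAt_const t 0
  have hsum := HasDerivAt.fun_sum (fun σ (_ : σ ∈ (Finset.univ : Finset (V → Spin))) => hterm σ)
  refine hsum.congr_deriv (Eq.symm ?_)
  rw [Nt, Finset.mul_sum]
  exact Finset.sum_congr rfl fun σ _ => by split <;> simp

lemma Nt_le_card_mul (t : ℝ) :
    Nt G J h ε β η P B2 s t ≤ (P.card : ℝ) * Zt G J h ε β η P B2 s t := by
  classical
  have key : (P.card : ℝ) * Zt G J h ε β η P B2 s t - Nt G J h ε β η P B2 s t =
      ∑ σ : V → Spin, if ∀ v ∈ B2, σ v = s then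
        ((P.card : ℝ) - mS P σ) * (Real.exp (-(β * hamG G J h ε η σ)) *
          Real.exp (β * ε * mS P σ * t)) else 0 := by
    rw [Zt, Nt, Finset.mul_sum, ← Finset.sum_sub_distrib]
    exact Finset.sum_congr rfl fun σ _ => by split <;> [ring; simp]
  have hnn : 0 ≤ (P.card : ℝ) * Zt G J h ε β η P B2 s t - Nt G J h ε β η P B2 s t := by
    rw [key]
    refine Finset.sum_nonneg fun σ _ => ?_
    split
    · exact mul_nonneg (by linarith [mS_le P σ]) (by positivity)
    · exact le_refl 0
  linarith

lemma neg_card_mul_le_Nt (t : ℝ) :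
    -(P.card : ℝ) * Zt G J h ε β η P B2 s t ≤ Nt G J h ε β η P B2 s t := by
  classical
  have key : Nt G J h ε β η P B2 s t - (-(P.card : ℝ)) * Zt G J h ε β η P B2 s t =
      ∑ σ : V → Spin, if ∀ v ∈ B2, σ v = s then
        (mS P σ + (P.card : ℝ)) * (Real.exp (-(β * hamG G J h ε η σ)) *
          Real.exp (β * ε * mS P σ * t)) else 0 := by
    rw [Zt, Nt, Finset.mul_sum, ← Finset.sum_sub_distrib]
    exact Finset.sum_congr rfl fun σ _ => by split <;> [ring; simp]
  have hnn : 0 ≤ Nt G J h ε β η P B2 s t - (-(P.card : ℝ)) * Zt G J h ε β η P B2 s t := by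
    rw [key]
    refine Finset.sum_nonneg fun σ _ => ?_
    split
    · exact mul_nonneg (by linarith [neg_le_mS P σ]) (by positivity)
    · exact le_refl 0
  linarith

lemma Zt_tendsto_top (hβ : 0 < β) (hε : 0 < ε) :
    Filter.Tendsto (fun t => Zt G J h ε β η P B2 s t *
      Real.exp (-(β * ε * P.card) * t)) Filter.atTop (𝓝 (Z2G G J h ε β η P B2 pl s)) := by
  classical
  have hform : ∀ t : ℝ, Zt G J h ε β η P B2 s t * Real.exp (-(β * ε * P.card) * t) =
      ∑ σ : V → Spin, if ∀ v ∈ B2, σ v = s then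
        Real.exp (-(β * hamG G J h ε η σ)) *
          Real.exp ((β * ε * (mS P σ - P.card)) * t) else 0 := by
    intro t
    rw [Zt, Finset.sum_mul]
    refine Finset.sum_congr rfl fun σ _ => ?_
    split
    · rw [mul_assoc, ← Real.exp_add]; congr 2; ring
    · rw [zero_mul]
  have hZ2G : Z2G G J h ε β η P B2 pl s = ∑ σ : V → Spin,
      if (∀ v ∈ P, σ v = pl) ∧ (∀ v ∈ B2, σ v = s) then
        Real.exp (-(β * hamG G J h ε η σ)) else 0 := rfl
  rw [hZ2G]
  refine Filter.Tendsto.congr (fun t => (hform t).symm) ?_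
  refine tendsto_finset_sum _ fun σ _ => ?_
  by_cases hc : ∀ v ∈ B2, σ v = s
  · by_cases hall : ∀ v ∈ P, σ v = pl
    · have hm : mS P σ = (P.card : ℝ) := (mS_eq_card_iff P σ).2 hall
      simp only [if_pos hc, if_pos (And.intro hall hc), hm, sub_self, mul_zero, zero_mul,
        Real.exp_zero, mul_one]
      exact tendsto_const_nhds
    · have hm : mS P σ < (P.card : ℝ) := by
        rcases lt_or_eq_of_le (mS_le P σ) with hlt | heq
        · exact hlt
        · exact absurd ((mS_eq_card_iff P σ).1 heq) hall
      have ha : β * ε * (mS P σ - P.card) < 0 := by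
        apply mul_neg_of_pos_of_neg (by positivity); linarith
      simp only [if_pos hc, if_neg (fun hh : (∀ v ∈ P, σ v = pl) ∧ _ => hall hh.1)]
      have h1 : Filter.Tendsto (fun t : ℝ => (β * ε * (mS P σ - P.card)) * t)
          Filter.atTop Filter.atBot := (Filter.tendsto_const_mul_atBot_of_neg ha).2 Filter.tendsto_id
      have h2 := Real.tendsto_exp_atBot.comp h1
      have h3 := h2.const_mul (Real.exp (-(β * hamG G J h ε η σ)))
      simpa using h3
  · simp only [if_neg hc, if_neg (fun hh : _ ∧ (∀ v ∈ B2, σ v = s) => hc hh.2)]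
    exact tendsto_const_nhds

lemma Zt_tendsto_bot (hβ : 0 < β) (hε : 0 < ε) :
    Filter.Tendsto (fun t => Zt G J h ε β η P B2 s t *
      Real.exp ((β * ε * P.card) * t)) Filter.atBot (𝓝 (Z2G G J h ε β η P B2 mn s)) := by
  classical
  have hform : ∀ t : ℝ, Zt G J h ε β η P B2 s t * Real.exp ((β * ε * P.card) * t) =
      ∑ σ : V → Spin, if ∀ v ∈ B2, σ v = s then
        Real.exp (-(β * hamG G J h ε η σ)) *
          Real.exp ((β * ε * (mS P σ + P.card)) * t) else 0 := by
    intro t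
    rw [Zt, Finset.sum_mul]
    refine Finset.sum_congr rfl fun σ _ => ?_
    split
    · rw [mul_assoc, ← Real.exp_add]; congr 2; ring
    · rw [zero_mul]
  have hZ2G : Z2G G J h ε β η P B2 mn s = ∑ σ : V → Spin,
      if (∀ v ∈ P, σ v = mn) ∧ (∀ v ∈ B2, σ v = s) then
        Real.exp (-(β * hamG G J h ε η σ)) else 0 := rfl
  rw [hZ2G]
  refine Filter.Tendsto.congr (fun t => (hform t).symm) ?_
  refine tendsto_finset_sum _ fun σ _ => ?_
  by_cases hc : ∀ v ∈ B2, σ v = s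
  · by_cases hall : ∀ v ∈ P, σ v = mn
    · have hm : mS P σ = -(P.card : ℝ) := (mS_eq_neg_card_iff P σ).2 hall
      simp only [if_pos hc, if_pos (And.intro hall hc), hm, neg_add_cancel, mul_zero, zero_mul,
        Real.exp_zero, mul_one]
      exact tendsto_const_nhds
    · have hm : -(P.card : ℝ) < mS P σ := by
        rcases lt_or_eq_of_le (neg_le_mS P σ) with hlt | heq
        · exact hlt
        · exact absurd ((mS_eq_neg_card_iff P σ).1 heq.symm) hall
      have ha : 0 < β * ε * (mS P σ + P.card) := by
        apply mul_pos (by positivity); linarith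
      simp only [if_pos hc, if_neg (fun hh : (∀ v ∈ P, σ v = mn) ∧ _ => hall hh.1)]
      have h1 : Filter.Tendsto (fun t : ℝ => (β * ε * (mS P σ + P.card)) * t)
          Filter.atBot Filter.atBot := (Filter.tendsto_const_mul_atBot_of_pos ha).2 Filter.tendsto_id
      have h2 := Real.tendsto_exp_atBot.comp h1
      have h3 := h2.const_mul (Real.exp (-(β * hamG G J h ε η σ)))
      simpa using h3
  · simp only [if_neg hc, if_neg (fun hh : _ ∧ (∀ v ∈ B2, σ v = s) => hc hh.2)]
    exact tendsto_const_nhds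

lemma thermal_sum_eq (t : ℝ) :
    ∑ v ∈ P, thermalG G J h ε β (fun v => η v + if v ∈ P then t else 0) B2 (fun _ => s)
      (fun σ => spinR (σ v)) =
    Nt G J h ε β η P B2 s t / Zt G J h ε β η P B2 s t := by
  classical
  unfold thermalG
  rw [ZG_shift G J h ε β η P B2 s t, ← Finset.sum_div]
  congr 1
  rw [Finset.sum_comm]
  refine Finset.sum_congr rfl fun σ _ => ?_
  by_cases hc : ∀ v ∈ B2, σ v = s
  · simp only [if_pos hc]
    rw [← Finset.sum_mul, ham_shift, ← Real.exp_add]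
    rw [show -(β * (hamG G J h ε η σ - ε * mS P σ * t)) =
      -(β * hamG G J h ε η σ) + β * ε * mS P σ * t by ring, Real.exp_add, ← mul_assoc]
    rw [mS]; ring
  · simp only [if_neg hc, Finset.sum_const_zero]

end AuxAnalytic

section AuxFTC
open scoped Topology
open MeasureTheory Set Filter
set_option linter.unusedSectionVars false

lemma integrableOn_Iic_of_comp_neg {f : ℝ → ℝ}
    (hf : IntegrableOn (fun x => f (-x)) (Set.Ioi (0:ℝ))) :
    IntegrableOn f (Set.Iic (0:ℝ)) := by
  have A : MeasurableEmbedding (fun x : ℝ => -x) :=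
    (Homeomorph.neg ℝ).isClosedEmbedding.measurableEmbedding
  have h1 : IntegrableOn (fun x => f (-x)) (Set.Ici (0:ℝ)) :=
    (integrableOn_Ici_iff_integrableOn_Ioi (by simp)).2 hf
  have hpre : (fun x : ℝ => -x) ⁻¹' (Set.Iic 0) = Set.Ici 0 := by
    ext x; simp
  have h2 : IntegrableOn f (Set.Iic 0) (Measure.map (fun x : ℝ => -x) volume) := by
    rw [A.integrableOn_map_iff, hpre]
    exact h1
  rwa [Measure.map_neg_eq_self (volume : Measure ℝ)] at h2

variable {V : Type} [Fintype V] [DecidableEq V]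
variable (G : SimpleGraph V) [DecidableRel G.Adj] (J h ε β : ℝ) (η : V → ℝ)
  (P B2 : Finset V) (s : Spin)

lemma gq_hasDerivAt (hβ : 0 < β) (t : ℝ) :
    HasDerivAt (fun u => β⁻¹ * Real.log (Zt G J h ε β η P B2 s u))
      (ε * (Nt G J h ε β η P B2 s t / Zt G J h ε β η P B2 s t)) t := by
  have hZ := Zt_pos G J h ε β η P B2 s t
  have hd := (Zt_hasDerivAt G J h ε β η P B2 s t).log hZ.ne'
  have hd2 := hd.const_mul β⁻¹
  refine hd2.congr_deriv (Eq.symm ?_)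
  field_simp

lemma glim_top (hβ : 0 < β) (hε : 0 < ε) (hB2P : ∀ v ∈ B2, v ∉ P) :
    Tendsto (fun t => β⁻¹ * Real.log (Zt G J h ε β η P B2 s t) - ε * P.card * t) atTop
      (𝓝 (β⁻¹ * Real.log (Z2G G J h ε β η P B2 pl s))) := by
  have hY := Z2G_pos G J h ε β η P B2 hB2P pl s
  have h7 := Zt_tendsto_top G J h ε β η P B2 s hβ hε
  have hlog := (h7.log hY.ne').const_mul β⁻¹
  refine hlog.congr fun t => ?_
  rw [Real.log_mul (Zt_pos G J h ε β η P B2 s t).ne' (Real.exp_pos _).ne', Real.log_exp]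
  field_simp
  ring

lemma glim_bot (hβ : 0 < β) (hε : 0 < ε) (hB2P : ∀ v ∈ B2, v ∉ P) :
    Tendsto (fun t => β⁻¹ * Real.log (Zt G J h ε β η P B2 s t) + ε * P.card * t) atBot
      (𝓝 (β⁻¹ * Real.log (Z2G G J h ε β η P B2 mn s))) := by
  have hY := Z2G_pos G J h ε β η P B2 hB2P mn s
  have h7 := Zt_tendsto_bot G J h ε β η P B2 s hβ hε
  have hlog := (h7.log hY.ne').const_mul β⁻¹
  refine hlog.congr fun t => ?_
  rw [Real.log_mul (Zt_pos G J h ε β η P B2 s t).ne' (Real.exp_pos _).ne', Real.log_exp]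
  field_simp

lemma int_Ioi (hβ : 0 < β) (hε : 0 < ε) (hB2P : ∀ v ∈ B2, v ∉ P) :
    IntegrableOn (fun t => ε * (Nt G J h ε β η P B2 s t / Zt G J h ε β η P B2 s t) -
        ε * P.card) (Set.Ioi (0:ℝ)) ∧
      ∫ t in Set.Ioi (0:ℝ), (ε * (Nt G J h ε β η P B2 s t / Zt G J h ε β η P B2 s t) -
        ε * P.card) =
      β⁻¹ * Real.log (Z2G G J h ε β η P B2 pl s) -
        β⁻¹ * Real.log (Zt G J h ε β η P B2 s 0) := by
  set g' : ℝ → ℝ := fun t => ε * (Nt G J h ε β η P B2 s t / Zt G J h ε β η P B2 s t) -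
    ε * P.card with hg'
  have hderiv : ∀ x ∈ Set.Ici (0:ℝ),
      HasDerivAt (fun u => β⁻¹ * Real.log (Zt G J h ε β η P B2 s u) - ε * P.card * u)
        (g' x) x := by
    intro x _
    have h1 := gq_hasDerivAt G J h ε β η P B2 s hβ x
    have h2 : HasDerivAt (fun u : ℝ => ε * P.card * u) (ε * P.card) x := by
      simpa using (hasDerivAt_id x).const_mul (ε * (P.card : ℝ))
    exact h1.sub h2
  have hnonpos : ∀ x ∈ Set.Ioi (0:ℝ), g' x ≤ 0 := by
    intro x _
    have hZ := Zt_pos G J h ε β η P B2 s x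
    have hN := Nt_le_card_mul G J h ε β η P B2 s x
    have : Nt G J h ε β η P B2 s x / Zt G J h ε β η P B2 s x ≤ (P.card : ℝ) :=
      (div_le_iff₀ hZ).2 (by linarith)
    have := mul_le_mul_of_nonneg_left this hε.le
    simp only [hg']
    linarith
  have htend := glim_top G J h ε β η P B2 s hβ hε hB2P
  refine ⟨integrableOn_Ioi_deriv_of_nonpos' hderiv hnonpos htend, ?_⟩
  rw [integral_Ioi_of_hasDerivAt_of_nonpos' hderiv hnonpos htend]
  ring

lemma int_Iic (hβ : 0 < β) (hε : 0 < ε) (hB2P : ∀ v ∈ B2, v ∉ P) :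
    IntegrableOn (fun t => ε * (Nt G J h ε β η P B2 s t / Zt G J h ε β η P B2 s t) +
        ε * P.card) (Set.Iic (0:ℝ)) ∧
      ∫ t in Set.Iic (0:ℝ), (ε * (Nt G J h ε β η P B2 s t / Zt G J h ε β η P B2 s t) +
        ε * P.card) =
      β⁻¹ * Real.log (Zt G J h ε β η P B2 s 0) -
        β⁻¹ * Real.log (Z2G G J h ε β η P B2 mn s) := by
  set φ : ℝ → ℝ := fun t => ε * (Nt G J h ε β η P B2 s t / Zt G J h ε β η P B2 s t) +
    ε * P.card with hφ
  set ψ : ℝ → ℝ := fun t => β⁻¹ * Real.log (Zt G J h ε β η P B2 s t) + ε * P.card * t with hψ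
  have hψderiv : ∀ x : ℝ, HasDerivAt ψ (φ x) x := by
    intro x
    have h1 := gq_hasDerivAt G J h ε β η P B2 s hβ x
    have h2 : HasDerivAt (fun u : ℝ => ε * P.card * u) (ε * P.card) x := by
      simpa using (hasDerivAt_id x).const_mul (ε * (P.card : ℝ))
    exact h1.add h2
  have hderiv : ∀ x ∈ Set.Ici (0:ℝ), HasDerivAt (fun u => ψ (-u)) (-φ (-x)) x := by
    intro x _
    have h3 := (hψderiv (-x)).comp x (hasDerivAt_neg x)
    simpa [mul_comm, Function.comp_def] using h3
  have hnonpos : ∀ x ∈ Set.Ioi (0:ℝ), -φ (-x) ≤ 0 := by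
    intro x _
    have hZ := Zt_pos G J h ε β η P B2 s (-x)
    have hN := neg_card_mul_le_Nt G J h ε β η P B2 s (-x)
    have hdiv : -(P.card : ℝ) ≤ Nt G J h ε β η P B2 s (-x) / Zt G J h ε β η P B2 s (-x) :=
      (le_div_iff₀ hZ).2 (by linarith)
    have := mul_le_mul_of_nonneg_left hdiv hε.le
    simp only [hφ]
    linarith
  have htend : Tendsto (fun u => ψ (-u)) atTop (𝓝 (β⁻¹ *
      Real.log (Z2G G J h ε β η P B2 mn s))) :=
    (glim_bot G J h ε β η P B2 s hβ hε hB2P).comp tendsto_neg_atTop_atBot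
  have hint := integrableOn_Ioi_deriv_of_nonpos' hderiv hnonpos htend
  have hval := integral_Ioi_of_hasDerivAt_of_nonpos' hderiv hnonpos htend
  have hintφ : IntegrableOn (fun x => φ (-x)) (Set.Ioi (0:ℝ)) := by
    exact hint.neg.congr (MeasureTheory.ae_of_all _ fun x => neg_neg _)
  constructor
  · exact integrableOn_Iic_of_comp_neg hintφ
  · have hioi : ∫ x in Set.Ioi (0:ℝ), φ (-x) = ψ 0 - β⁻¹ *
        Real.log (Z2G G J h ε β η P B2 mn s) := by
      have : ∫ x in Set.Ioi (0:ℝ), -φ (-x) = - ∫ x in Set.Ioi (0:ℝ), φ (-x) := by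
        exact integral_neg _
      rw [this] at hval
      have hψ0 : ψ 0 = β⁻¹ * Real.log (Zt G J h ε β η P B2 s 0) := by simp [hψ]
      linarith [hval]
    have hcomp := _root_.integral_comp_neg_Ioi (0:ℝ) φ
    rw [neg_zero] at hcomp
    rw [← hcomp, hioi]
    simp [hψ]

end AuxFTC

section AuxLattice
open scoped Topology
open MeasureTheory Set Filter
set_option linter.unusedSectionVars false

lemma mem_nbrs_of_dist1 {d : ℕ} {u v : Fin d → ℤ} (hd : dist1 u v = 1) : v ∈ nbrs u := by
  classical
  have hnn : ∀ i, 0 ≤ |u i - v i| := fun i => abs_nonneg _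
  obtain ⟨i, hi⟩ : ∃ i, u i ≠ v i := by
    by_contra hno
    push_neg at hno
    have : dist1 u v = 0 := Finset.sum_eq_zero fun i _ => by rw [hno i]; simp
    omega
  have hi1 : 1 ≤ |u i - v i| := Int.one_le_abs (sub_ne_zero.2 hi)
  have hsum : dist1 u v = |u i - v i| + ∑ j ∈ Finset.univ.erase i, |u j - v j| :=
    (Finset.add_sum_erase _ _ (Finset.mem_univ i)).symm
  have hrest_nn : 0 ≤ ∑ j ∈ Finset.univ.erase i, |u j - v j| :=
    Finset.sum_nonneg fun j _ => hnn j
  have hrest : ∑ j ∈ Finset.univ.erase i, |u j - v j| = 0 := by omega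
  have hj : ∀ j, j ≠ i → u j = v j := by
    intro j hji
    have h0 := (Finset.sum_eq_zero_iff_of_nonneg fun k _ => hnn k).1 hrest j
      (Finset.mem_erase.2 ⟨hji, Finset.mem_univ j⟩)
    have := abs_eq_zero.1 h0
    omega
  have habs : |u i - v i| = 1 := by omega
  rcases (abs_eq (by norm_num : (0:ℤ) ≤ 1)).1 habs with hca | hca
  · -- u i - v i = 1, so v i = u i - 1
    have hv : v = Function.update u i (u i - 1) := by
      funext j
      by_cases hji : j = i
      · subst hji; rw [Function.update_self]; omega
      · rw [Function.update_of_ne hji]; exact (hj j hji).symm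
    rw [nbrs, Finset.mem_union]
    right
    exact Finset.mem_image.2 ⟨i, Finset.mem_univ i, hv.symm⟩
  · -- u i - v i = -1, so v i = u i + 1
    have hv : v = Function.update u i (u i + 1) := by
      funext j
      by_cases hji : j = i
      · subst hji; rw [Function.update_self]; omega
      · rw [Function.update_of_ne hji]; exact (hj j hji).symm
    rw [nbrs, Finset.mem_union]
    left
    exact Finset.mem_image.2 ⟨i, Finset.mem_univ i, hv.symm⟩

lemma mem_inΛ_iff {d : ℕ} {Λ A : Finset (Fin d → ℤ)} {v : ↥Λ} :
    v ∈ inΛ Λ A ↔ (v : Fin d → ℤ) ∈ A := by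
  simp [inΛ]

lemma nbrs_subset_of_not_vbdry {d : ℕ} {Λ : Finset (Fin d → ℤ)} {x : Fin d → ℤ}
    (hx : x ∈ Λ) (hnx : x ∉ vbdry Λ) : nbrs x ⊆ Λ := by
  by_contra hns
  exact hnx (Finset.mem_filter.2 ⟨hx, hns⟩)

end AuxLattice

section AuxMain
open scoped Topology
open MeasureTheory Set Filter
set_option linter.unusedSectionVars false

lemma DL_eq_ratio (Λ₁ Λ₂ : Finset (Fin 2 → ℤ)) (J h ε β : ℝ) (η : (Fin 2 → ℤ) → ℝ) (t : ℝ) :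
    DL 2 Λ₁ Λ₂ J h ε β (shiftF Λ₁ t η) =
      (1/2 : ℝ) * (Nt (latG 2 Λ₂) J h ε β (restF Λ₂ η) (inΛ Λ₂ Λ₁) (inΛ Λ₂ (vbdry Λ₂)) pl t /
          Zt (latG 2 Λ₂) J h ε β (restF Λ₂ η) (inΛ Λ₂ Λ₁) (inΛ Λ₂ (vbdry Λ₂)) pl t -
        Nt (latG 2 Λ₂) J h ε β (restF Λ₂ η) (inΛ Λ₂ Λ₁) (inΛ Λ₂ (vbdry Λ₂)) mn t /
          Zt (latG 2 Λ₂) J h ε β (restF Λ₂ η) (inΛ Λ₂ Λ₁) (inΛ Λ₂ (vbdry Λ₂)) mn t) := by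
  classical
  have hfield : restF Λ₂ (shiftF Λ₁ t η) =
      fun v => restF Λ₂ η v + if v ∈ inΛ Λ₂ Λ₁ then t else 0 := by
    funext v
    by_cases hv : (v : Fin 2 → ℤ) ∈ Λ₁ <;>
      simp [restF, shiftF, mem_inΛ_iff, hv]
  simp only [DL, thermalL, hfield]
  have hsplit : ∀ (f g : ↥Λ₂ → ℝ),
      ∑ v : ↥Λ₂, (if (v : Fin 2 → ℤ) ∈ Λ₁ then f v - g v else 0) =
      (∑ v : ↥Λ₂, if (v : Fin 2 → ℤ) ∈ Λ₁ then f v else 0) -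
        (∑ v : ↥Λ₂, if (v : Fin 2 → ℤ) ∈ Λ₁ then g v else 0) := by
    intro f g
    rw [← Finset.sum_sub_distrib]
    exact Finset.sum_congr rfl fun v _ => by split <;> simp
  rw [hsplit]
  have hP : ∀ (T : ↥Λ₂ → ℝ), (∑ v : ↥Λ₂, if (v : Fin 2 → ℤ) ∈ Λ₁ then T v else 0)
      = ∑ v ∈ inΛ Λ₂ Λ₁, T v := fun T => (Finset.sum_filter _ _).symm
  rw [hP, hP, thermal_sum_eq, thermal_sum_eq]

lemma main_general {V : Type} [Fintype V] [DecidableEq V]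
    (G : SimpleGraph V) [DecidableRel G.Adj] (J h ε β : ℝ) (η₀ : V → ℝ)
    (P B1 B2 : Finset V) (hβ : 0 < β) (hε : 0 < ε)
    (hB1P : B1 ⊆ P) (hB2P : ∀ v ∈ B2, v ∉ P)
    (hsep : ∀ u v : V, G.Adj u v → u ∈ P → u ∉ B1 → v ∈ P) :
    β⁻¹ * Real.log
      ((Z2G G J h ε β η₀ B1 B2 pl pl * Z2G G J h ε β η₀ B1 B2 mn mn) /
       (Z2G G J h ε β η₀ B1 B2 pl mn * Z2G G J h ε β η₀ B1 B2 mn pl)) =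
    2 * ε * ∫ t : ℝ,
      (1/2 : ℝ) * (Nt G J h ε β η₀ P B2 pl t / Zt G J h ε β η₀ P B2 pl t -
        Nt G J h ε β η₀ P B2 mn t / Zt G J h ε β η₀ P B2 mn t) := by
  classical
  have hB2B1 : ∀ v ∈ B2, v ∉ B1 := fun v hv hb => hB2P v hv (hB1P hb)
  -- positivity
  have hz : ∀ r s : Spin, 0 < Z2G G J h ε β η₀ B1 B2 r s :=
    fun r s => Z2G_pos G J h ε β η₀ B1 B2 hB2B1 r s
  have hY : ∀ r s : Spin, 0 < Z2G G J h ε β η₀ P B2 r s :=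
    fun r s => Z2G_pos G J h ε β η₀ P B2 hB2P r s
  -- the swap identity
  have hs1 := Z2G_swap G J h ε β η₀ P B1 B2 hB1P hB2P hsep pl pl mn
  have hs2 := Z2G_swap G J h ε β η₀ P B1 B2 hB1P hB2P hsep mn mn pl
  have hratio :
      (Z2G G J h ε β η₀ B1 B2 pl pl * Z2G G J h ε β η₀ B1 B2 mn mn) /
        (Z2G G J h ε β η₀ B1 B2 pl mn * Z2G G J h ε β η₀ B1 B2 mn pl) =
      (Z2G G J h ε β η₀ P B2 pl pl * Z2G G J h ε β η₀ P B2 mn mn) /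
        (Z2G G J h ε β η₀ P B2 pl mn * Z2G G J h ε β η₀ P B2 mn pl) := by
    rw [div_eq_div_iff (mul_pos (hz pl mn) (hz mn pl)).ne'
      (mul_pos (hY pl mn) (hY mn pl)).ne']
    linear_combination (Z2G G J h ε β η₀ B1 B2 mn mn * Z2G G J h ε β η₀ P B2 mn pl) * hs1 +
      (Z2G G J h ε β η₀ P B2 pl pl * Z2G G J h ε β η₀ B1 B2 pl mn) * hs2
  -- integrals
  obtain ⟨hi₁, hv₁⟩ := int_Ioi G J h ε β η₀ P B2 pl hβ hε hB2P
  obtain ⟨hi₂, hv₂⟩ := int_Ioi G J h ε β η₀ P B2 mn hβ hε hB2P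
  obtain ⟨hi₃, hv₃⟩ := int_Iic G J h ε β η₀ P B2 pl hβ hε hB2P
  obtain ⟨hi₄, hv₄⟩ := int_Iic G J h ε β η₀ P B2 mn hβ hε hB2P
  set F : ℝ → ℝ := fun t =>
    (1/2 : ℝ) * (Nt G J h ε β η₀ P B2 pl t / Zt G J h ε β η₀ P B2 pl t -
      Nt G J h ε β η₀ P B2 mn t / Zt G J h ε β η₀ P B2 mn t) with hF
  have hFIoi : IntegrableOn F (Set.Ioi (0:ℝ)) := by
    refine ((hi₁.sub hi₂).const_mul ((2*ε)⁻¹)).congr (ae_of_all _ fun t => ?_)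
    simp only [hF, Pi.sub_apply]
    field_simp
    ring
  have hFIic : IntegrableOn F (Set.Iic (0:ℝ)) := by
    refine ((hi₃.sub hi₄).const_mul ((2*ε)⁻¹)).congr (ae_of_all _ fun t => ?_)
    simp only [hF, Pi.sub_apply]
    field_simp
    ring
  have hIoiVal : ∫ t in Set.Ioi (0:ℝ), F t =
      (2*ε)⁻¹ * ((β⁻¹ * Real.log (Z2G G J h ε β η₀ P B2 pl pl) -
          β⁻¹ * Real.log (Zt G J h ε β η₀ P B2 pl 0)) -
        (β⁻¹ * Real.log (Z2G G J h ε β η₀ P B2 pl mn) -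
          β⁻¹ * Real.log (Zt G J h ε β η₀ P B2 mn 0))) := by
    have hcong : ∫ t in Set.Ioi (0:ℝ), F t = ∫ t in Set.Ioi (0:ℝ),
        (2*ε)⁻¹ * ((ε * (Nt G J h ε β η₀ P B2 pl t / Zt G J h ε β η₀ P B2 pl t) - ε * P.card) -
          (ε * (Nt G J h ε β η₀ P B2 mn t / Zt G J h ε β η₀ P B2 mn t) - ε * P.card)) := by
      refine setIntegral_congr_fun measurableSet_Ioi fun t _ => ?_
      simp only [hF]
      field_simp
      ring
    rw [hcong, integral_const_mul _ _, integral_sub hi₁ hi₂, hv₁, hv₂]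
  have hIicVal : ∫ t in Set.Iic (0:ℝ), F t =
      (2*ε)⁻¹ * ((β⁻¹ * Real.log (Zt G J h ε β η₀ P B2 pl 0) -
          β⁻¹ * Real.log (Z2G G J h ε β η₀ P B2 mn pl)) -
        (β⁻¹ * Real.log (Zt G J h ε β η₀ P B2 mn 0) -
          β⁻¹ * Real.log (Z2G G J h ε β η₀ P B2 mn mn))) := by
    have hcong : ∫ t in Set.Iic (0:ℝ), F t = ∫ t in Set.Iic (0:ℝ),
        (2*ε)⁻¹ * ((ε * (Nt G J h ε β η₀ P B2 pl t / Zt G J h ε β η₀ P B2 pl t) + ε * P.card) -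
          (ε * (Nt G J h ε β η₀ P B2 mn t / Zt G J h ε β η₀ P B2 mn t) + ε * P.card)) := by
      refine setIntegral_congr_fun measurableSet_Iic fun t _ => ?_
      simp only [hF]
      field_simp
      ring
    rw [hcong, integral_const_mul _ _, integral_sub hi₃ hi₄, hv₃, hv₄]
  rw [hratio]
  rw [Real.log_div (mul_pos (hY pl pl) (hY mn mn)).ne' (mul_pos (hY pl mn) (hY mn pl)).ne',
    Real.log_mul (hY pl pl).ne' (hY mn mn).ne', Real.log_mul (hY pl mn).ne' (hY mn pl).ne']
  rw [← intervalIntegral.integral_Iic_add_Ioi hFIic hFIoi, hIicVal, hIoiVal]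
  field_simp
  ring

end AuxMain

/-- **Integral identity for the surface tension** (Theorem 4.2, first equality): for
nested finite subgraphs `Λ₁ ⊆ Λ₂` of `ℤ²` with disjoint internal vertex boundaries, at
`β ∈ (0,∞)`, and for every field realization `η`,
`T_{Λ₁,Λ₂}(η) = 2ε ∫_ℝ D_{Λ₁,Λ₂}(η^{(t)}) dt`, where `η^{(t)}` adds a uniform field of
intensity `t` on `Λ₁`. -/
theorem surface_tension_integral_identity
    (Λ₁ Λ₂ : Finset (Fin 2 → ℤ)) (hsub : Λ₁ ⊆ Λ₂)
    (hdisj : Disjoint (vbdry Λ₁) (vbdry Λ₂))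
    (J h ε β : ℝ) (hJ : 0 < J) (hε : 0 < ε) (hβ : 0 < β) :
    ∀ η : (Fin 2 → ℤ) → ℝ,
      surfT 2 Λ₁ Λ₂ J h ε β η =
        2 * ε * ∫ t : ℝ, DL 2 Λ₁ Λ₂ J h ε β (shiftF Λ₁ t η) := by
  intro η
  classical
  have hB1P : inΛ Λ₂ (vbdry Λ₁) ⊆ inΛ Λ₂ Λ₁ := by
    intro v hv
    exact mem_inΛ_iff.2 (Finset.mem_of_mem_filter _ (mem_inΛ_iff.1 hv))
  have hB2P : ∀ v ∈ inΛ Λ₂ (vbdry Λ₂), v ∉ inΛ Λ₂ Λ₁ := by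
    intro v hv hvP
    have h2 : (v : Fin 2 → ℤ) ∈ vbdry Λ₂ := mem_inΛ_iff.1 hv
    have h1 : (v : Fin 2 → ℤ) ∈ Λ₁ := mem_inΛ_iff.1 hvP
    have hnb : ¬ nbrs (v : Fin 2 → ℤ) ⊆ Λ₂ := (Finset.mem_filter.1 h2).2
    have hb1 : (v : Fin 2 → ℤ) ∈ vbdry Λ₁ :=
      Finset.mem_filter.2 ⟨h1, fun hs => hnb (hs.trans hsub)⟩
    exact (Finset.disjoint_left.1 hdisj hb1) h2
  have hsep : ∀ u v : ↥Λ₂, (latG 2 Λ₂).Adj u v → u ∈ inΛ Λ₂ Λ₁ →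
      u ∉ inΛ Λ₂ (vbdry Λ₁) → v ∈ inΛ Λ₂ Λ₁ := by
    intro u v hadj huP huB1
    have hu1 : (u : Fin 2 → ℤ) ∈ Λ₁ := mem_inΛ_iff.1 huP
    have hub : (u : Fin 2 → ℤ) ∉ vbdry Λ₁ := fun hb => huB1 (mem_inΛ_iff.2 hb)
    have hsubn : nbrs (u : Fin 2 → ℤ) ⊆ Λ₁ := nbrs_subset_of_not_vbdry hu1 hub
    have hd : dist1 (u : Fin 2 → ℤ) (v : Fin 2 → ℤ) = 1 := hadj
    exact mem_inΛ_iff.2 (hsubn (mem_nbrs_of_dist1 hd))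
  have hmain := main_general (latG 2 Λ₂) J h ε β (restF Λ₂ η) (inΛ Λ₂ Λ₁)
    (inΛ Λ₂ (vbdry Λ₁)) (inΛ Λ₂ (vbdry Λ₂)) hβ hε hB1P hB2P hsep
  simp only [DL_eq_ratio]
  exact hmain

end RFIM
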